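/- arXiv:2510.22012 — 2 statements merged into one kernel-verified Lean document; each statement's English description precedes it below -/
import Mathlib

section
/- The Euler–Lagrange equations ∂L/∂x^k − d/dt(∂L/∂y^k) = 0 with y^k = dx^k/dt, for the least squares Lagrangian L(x,y) = Σ_j(y^j − X^j(x))^2, are equivalent to d²x^k/dt² + 2G^k(x, dx/dt) = 0 for k = 1,…,n, where G^k = −(1/2)[Σ_j (∂X^k/∂x^j − ∂X^j/∂x^k)(dx^j/dt) + Σ_j (∂X^j/∂x^k) X^j(x)]. -/
/-- Partial derivative of a scalar function on ℝⁿ in the k-th coordinate direction. -/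
noncomputable def pd {n : ℕ} (k : Fin n) (f : (Fin n → ℝ) → ℝ) (x : Fin n → ℝ) : ℝ :=
  fderiv ℝ f x (Pi.single k 1)


lemma clm_apply_eq_sum {n : ℕ} (φ : (Fin n → ℝ) →L[ℝ] ℝ) (v : Fin n → ℝ) :
    φ v = ∑ j, v j * φ (Pi.single j 1) := by
  have hv : v = ∑ j, Pi.single j (v j) := (Finset.univ_sum_single v).symm
  conv_lhs => rw [hv]
  rw [map_sum]
  refine Finset.sum_congr rfl fun j _ => ?_
  have h : Pi.single j (v j) = v j • (Pi.single j (1:ℝ) : Fin n → ℝ) := by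
    funext i; by_cases hij : i = j <;> simp [Pi.single_apply, hij]
  rw [h, map_smul, smul_eq_mul]

lemma hasFDerivAt_sq {n : ℕ} (f : (Fin n → ℝ) → ℝ) (f' : (Fin n → ℝ) →L[ℝ] ℝ)
    (y : Fin n → ℝ) (h : HasFDerivAt f f' y) :
    HasFDerivAt (fun y' => f y' ^ 2) ((2 * f y) • f') y := by
  have h2 := h.mul h
  simp only [← pow_two] at h2
  rw [two_mul, add_smul]
  exact h2

lemma pd_y_sq_sum {n : ℕ} (c y : Fin n → ℝ) (k : Fin n) :
    pd k (fun y' : Fin n → ℝ => ∑ j, (y' j - c j) ^ 2) y = 2 * (y k - c k) := by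
  have H : HasFDerivAt (fun y' : Fin n → ℝ => ∑ j, (y' j - c j) ^ 2)
      (∑ j, (2 * (y j - c j)) • ((ContinuousLinearMap.proj j : (Fin n → ℝ) →L[ℝ] ℝ))) y := by
    apply HasFDerivAt.fun_sum
    intro j _
    exact hasFDerivAt_sq _ _ _
      (((ContinuousLinearMap.proj j : (Fin n → ℝ) →L[ℝ] ℝ).hasFDerivAt (x := y)).sub_const (c j))
  rw [pd, H.fderiv]
  simp [ContinuousLinearMap.sum_apply, Pi.single_apply, Finset.sum_ite_eq]

lemma pd_x_sq_sum {n : ℕ} (X : (Fin n → ℝ) → (Fin n → ℝ)) (hX : ContDiff ℝ 2 X)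
    (y x : Fin n → ℝ) (k : Fin n) :
    pd k (fun x' : Fin n → ℝ => ∑ j, (y j - X x' j) ^ 2) x
      = ∑ j, -(2 * (y j - X x j) * pd k (fun x' => X x' j) x) := by
  have hXj : ∀ j, DifferentiableAt ℝ (fun x' => X x' j) x := fun j =>
    ((contDiff_pi.mp hX j).differentiable (by norm_num)).differentiableAt
  have H : HasFDerivAt (fun x' : Fin n → ℝ => ∑ j, (y j - X x' j) ^ 2)
      (∑ j, (2 * (y j - X x j)) • (-(fderiv ℝ (fun x' => X x' j) x))) x := by
    apply HasFDerivAt.fun_sum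
    intro j _
    exact hasFDerivAt_sq _ _ _ ((hXj j).hasFDerivAt.const_sub (y j))
  rw [pd, H.fderiv]
  simp only [ContinuousLinearMap.sum_apply, ContinuousLinearMap.smul_apply,
    ContinuousLinearMap.neg_apply, smul_eq_mul]
  refine Finset.sum_congr rfl fun j _ => ?_
  rw [pd]; ring

lemma alg_step {n : ℕ} (y a b c : Fin n → ℝ) (z : ℝ) :
    (∑ j, -(2 * (y j - c j) * a j)) - 2 * (z - ∑ j, y j * b j)
      = -2 * (z + 2 * (-(1 / 2) * ((∑ j, (b j - a j) * y j) + ∑ j, a j * c j))) := by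
  have A : ∑ j, -(2 * (y j - c j) * a j)
      = -2 * (∑ j, y j * a j) + 2 * (∑ j, c j * a j) := by
    rw [Finset.mul_sum, Finset.mul_sum, ← Finset.sum_add_distrib]
    exact Finset.sum_congr rfl fun j _ => by ring
  have B : ∑ j, (b j - a j) * y j = (∑ j, y j * b j) - ∑ j, y j * a j := by
    rw [← Finset.sum_sub_distrib]
    exact Finset.sum_congr rfl fun j _ => by ring
  have C : ∑ j, a j * c j = ∑ j, c j * a j :=
    Finset.sum_congr rfl fun j _ => by ring
  rw [A, B, C]; ring


/-- For the least squares Lagrangian L(x,y) = Σⱼ (yʲ − Xʲ(x))², the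
Euler–Lagrange equations ∂L/∂xᵏ − d/dt(∂L/∂yᵏ) = 0 along a C² curve (with yᵏ = dxᵏ/dt)
are equivalent to d²xᵏ/dt² + 2Gᵏ(x, dx/dt) = 0 for all k, where
Gᵏ = −(1/2)[Σⱼ (∂Xᵏ/∂xʲ − ∂Xʲ/∂xᵏ)yʲ + Σⱼ (∂Xʲ/∂xᵏ) Xʲ]. -/
theorem euler_lagrange_iff_geodesic_form
    (n : ℕ) (X : (Fin n → ℝ) → (Fin n → ℝ)) (hX : ContDiff ℝ 2 X)
    (L : (Fin n → ℝ) → (Fin n → ℝ) → ℝ)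
    (hL : ∀ x y, L x y = ∑ j, (y j - X x j) ^ 2)
    (G : Fin n → (Fin n → ℝ) → (Fin n → ℝ) → ℝ)
    (hG : ∀ k x y, G k x y =
      -(1 / 2) * ((∑ j, (pd j (fun x' => X x' k) x - pd k (fun x' => X x' j) x) * y j)
        + ∑ j, pd k (fun x' => X x' j) x * X x j))
    (x : ℝ → (Fin n → ℝ)) (hx : ContDiff ℝ 2 x) :
    (∀ k t, pd k (fun x' => L x' (deriv x t)) (x t)
        - deriv (fun s => pd k (fun y' => L (x s) y') (deriv x s)) t = 0)
      ↔ (∀ k t, deriv (deriv x) t k + 2 * G k (x t) (deriv x t) = 0) := by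
  classical
  have hxd : Differentiable ℝ x := hx.differentiable (by norm_num)
  have hdx : ContDiff ℝ 1 (deriv x) := by
    have h2 : ContDiff ℝ ((1:ℕ) + 1) x := by exact_mod_cast hx
    exact (contDiff_succ_iff_deriv.mp h2).2.2
  have hdxd : Differentiable ℝ (deriv x) := hdx.differentiable (by norm_num)
  have key : ∀ k t, pd k (fun x' => L x' (deriv x t)) (x t)
        - deriv (fun s => pd k (fun y' => L (x s) y') (deriv x s)) t
      = -2 * (deriv (deriv x) t k + 2 * G k (x t) (deriv x t)) := by
    intro k t
    -- first term
    have e1 : pd k (fun x' => L x' (deriv x t)) (x t)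
        = ∑ j, -(2 * (deriv x t j - X (x t) j) * pd k (fun x' => X x' j) (x t)) := by
      simp only [hL]
      exact pd_x_sq_sum X hX _ _ k
    -- inner pd as a function of s
    have e2 : (fun s => pd k (fun y' => L (x s) y') (deriv x s))
        = fun s => 2 * (deriv x s k - X (x s) k) := by
      funext s
      simp only [hL]
      exact pd_y_sq_sum _ _ k
    -- derivative of the inner function
    have hXk : ContDiff ℝ 2 (fun v => X v k) := contDiff_pi.mp hX k
    have hcomp : HasDerivAt (fun s => X (x s) k)
        (fderiv ℝ (fun v => X v k) (x t) (deriv x t)) t :=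
      (hXk.differentiable (by norm_num) (x t)).hasFDerivAt.comp_hasDerivAt t
        (hxd t).hasDerivAt
    have hk1 : HasDerivAt (fun s => deriv x s k) (deriv (deriv x) t k) t := by
      have := (hdxd t).hasDerivAt
      exact (hasDerivAt_pi.mp this) k
    have e3 : deriv (fun s => 2 * (deriv x s k - X (x s) k)) t
        = 2 * (deriv (deriv x) t k - fderiv ℝ (fun v => X v k) (x t) (deriv x t)) :=
      (((hk1.sub hcomp).const_mul 2)).deriv
    have e4 : fderiv ℝ (fun v => X v k) (x t) (deriv x t)
        = ∑ j, deriv x t j * pd j (fun v => X v k) (x t) := by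
      rw [clm_apply_eq_sum]
      rfl
    rw [e1, e2, e3, e4, hG]
    exact alg_step (deriv x t) (fun j => pd k (fun x' => X x' j) (x t))
      (fun j => pd j (fun x' => X x' k) (x t)) (fun j => X (x t) j)
      (deriv (deriv x) t k)
  constructor
  · intro h k t
    have h1 := h k t
    have h2 := key k t
    nlinarith [h1, h2]
  · intro h k t
    have h1 := h k t
    have h2 := key k t
    rw [h2, h1]
    ring
end

section
/- For the COVID-19 system, the Yang–Mills electromagnetic-like energy equals EYM = (N^1_2)² + (N^1_3)² + (N^1_4)² + (N^1_5)² + (N^1_6)² + (N^2_3)² + (N^2_4)² + (N^2_5)² + (N^2_6)² + (1/4)(φ_s² + γ_s² + γ_a² + γ_h²), where N^i_j are the entries of N = −(1/2)(J − J^t); in particular EYM ≥ (1/4)(φ_s² + γ_s² + γ_a² + γ_h²) at every point of the domain. -/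
/-- The COVID-19 vector field on ℝ⁶, coordinates (x⁰,…,x⁵) = (S,E,Iₛ,Iₐ,I_h,R). -/
noncomputable def covidX (βs βa βh σ r φs γs γa γh δs δh : ℝ)
    (x : Fin 6 → ℝ) : Fin 6 → ℝ :=
  let S := x 0; let E := x 1; let Is := x 2; let Ia := x 3; let Ih := x 4; let R := x 5
  let lam := (βs * Is + βa * Ia + βh * Ih) / (S + E + Is + Ia + Ih + R)
  ![-lam * S, lam * S - σ * E, (1 - r) * σ * E - (φs + γs + δs) * Is,
    r * σ * E - γa * Ia, φs * Is - (γh + δh) * Ih, γs * Is + γa * Ia + γh * Ih]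

/-- The Jacobian matrix of the COVID-19 vector field. -/
noncomputable def covidJ (βs βa βh σ r φs γs γa γh δs δh : ℝ)
    (x : Fin 6 → ℝ) : Matrix (Fin 6) (Fin 6) ℝ :=
  fun i j =>
    fderiv ℝ (fun x' => covidX βs βa βh σ r φs γs γa γh δs δh x' i) x (Pi.single j 1)

lemma fd4 (a b c d : ℝ) (x : Fin 6 → ℝ) (j : Fin 6) :
    fderiv ℝ (fun x' : Fin 6 → ℝ => a * x' 1 + b * x' 2 + c * x' 3 + d * x' 4) x (Pi.single j 1)
      = a * (Pi.single j 1 : Fin 6 → ℝ) 1 + b * (Pi.single j 1 : Fin 6 → ℝ) 2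
        + c * (Pi.single j 1 : Fin 6 → ℝ) 3 + d * (Pi.single j 1 : Fin 6 → ℝ) 4 := by
  have h : HasFDerivAt (fun x' : Fin 6 → ℝ => a * x' 1 + b * x' 2 + c * x' 3 + d * x' 4)
      (a • (ContinuousLinearMap.proj 1 : (Fin 6 → ℝ) →L[ℝ] ℝ)
        + b • ContinuousLinearMap.proj 2 + c • ContinuousLinearMap.proj 3
        + d • ContinuousLinearMap.proj 4) x := by
    exact ((((ContinuousLinearMap.proj 1 : (Fin 6 → ℝ) →L[ℝ] ℝ).hasFDerivAt.const_mul a).add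
      ((ContinuousLinearMap.proj 2 : (Fin 6 → ℝ) →L[ℝ] ℝ).hasFDerivAt.const_mul b)).add
      ((ContinuousLinearMap.proj 3 : (Fin 6 → ℝ) →L[ℝ] ℝ).hasFDerivAt.const_mul c)).add
      ((ContinuousLinearMap.proj 4 : (Fin 6 → ℝ) →L[ℝ] ℝ).hasFDerivAt.const_mul d)
  rw [h.fderiv]
  simp [smul_eq_mul]

lemma covidJ_lower (βs βa βh σ r φs γs γa γh δs δh : ℝ) (x : Fin 6 → ℝ) :
    covidJ βs βa βh σ r φs γs γa γh δs δh x 2 3 = 0 ∧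
    covidJ βs βa βh σ r φs γs γa γh δs δh x 3 2 = 0 ∧
    covidJ βs βa βh σ r φs γs γa γh δs δh x 2 4 = 0 ∧
    covidJ βs βa βh σ r φs γs γa γh δs δh x 4 2 = φs ∧
    covidJ βs βa βh σ r φs γs γa γh δs δh x 2 5 = 0 ∧
    covidJ βs βa βh σ r φs γs γa γh δs δh x 5 2 = γs ∧
    covidJ βs βa βh σ r φs γs γa γh δs δh x 3 4 = 0 ∧
    covidJ βs βa βh σ r φs γs γa γh δs δh x 4 3 = 0 ∧
    covidJ βs βa βh σ r φs γs γa γh δs δh x 3 5 = 0 ∧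
    covidJ βs βa βh σ r φs γs γa γh δs δh x 5 3 = γa ∧
    covidJ βs βa βh σ r φs γs γa γh δs δh x 4 5 = 0 ∧
    covidJ βs βa βh σ r φs γs γa γh δs δh x 5 4 = γh := by
  have hrow2 : (fun x' : Fin 6 → ℝ => covidX βs βa βh σ r φs γs γa γh δs δh x' 2)
      = fun x' => ((1-r)*σ) * x' 1 + (-(φs+γs+δs)) * x' 2 + (0:ℝ) * x' 3 + (0:ℝ) * x' 4 := by
    funext x'; show (1 - r) * σ * x' 1 - (φs + γs + δs) * x' 2 = _; ring
  have hrow3 : (fun x' : Fin 6 → ℝ => covidX βs βa βh σ r φs γs γa γh δs δh x' 3)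
      = fun x' => (r*σ) * x' 1 + (0:ℝ) * x' 2 + (-γa) * x' 3 + (0:ℝ) * x' 4 := by
    funext x'; show r * σ * x' 1 - γa * x' 3 = _; ring
  have hrow4 : (fun x' : Fin 6 → ℝ => covidX βs βa βh σ r φs γs γa γh δs δh x' 4)
      = fun x' => (0:ℝ) * x' 1 + φs * x' 2 + (0:ℝ) * x' 3 + (-(γh+δh)) * x' 4 := by
    funext x'; show φs * x' 2 - (γh + δh) * x' 4 = _; ring
  have hrow5 : (fun x' : Fin 6 → ℝ => covidX βs βa βh σ r φs γs γa γh δs δh x' 5)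
      = fun x' => (0:ℝ) * x' 1 + γs * x' 2 + γa * x' 3 + γh * x' 4 := by
    funext x'; show γs * x' 2 + γa * x' 3 + γh * x' 4 = _; ring
  refine ⟨?_, ?_, ?_, ?_, ?_, ?_, ?_, ?_, ?_, ?_, ?_, ?_⟩ <;>
    · rw [covidJ]
      first
        | rw [hrow2, fd4] | rw [hrow3, fd4] | rw [hrow4, fd4] | rw [hrow5, fd4]
      simp [Pi.single_apply]


/-- For the COVID-19 system, the Yang–Mills electromagnetic-like energy
EYM = (1/2)Trace(F Fᵀ), F = −N, N = −(1/2)(J − Jᵀ), equals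
(N¹₂)²+(N¹₃)²+(N¹₄)²+(N¹₅)²+(N¹₆)²+(N²₃)²+(N²₄)²+(N²₅)²+(N²₆)²
+ (1/4)(φₛ²+γₛ²+γₐ²+γ_h²) (1-based indices); in particular
EYM ≥ (1/4)(φₛ²+γₛ²+γₐ²+γ_h²) at every point of the domain. -/
theorem covid_yang_mills_energy
    (βs βa βh σ r φs γs γa γh δs δh : ℝ)
    (Nc : (Fin 6 → ℝ) → Matrix (Fin 6) (Fin 6) ℝ)
    (hNc : ∀ x i j, Nc x i j =
      -(1 / 2) * (covidJ βs βa βh σ r φs γs γa γh δs δh x i j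
        - covidJ βs βa βh σ r φs γs γa γh δs δh x j i))
    (F : (Fin 6 → ℝ) → Matrix (Fin 6) (Fin 6) ℝ) (hF : ∀ x, F x = -(Nc x))
    (EYM : (Fin 6 → ℝ) → ℝ)
    (hEYM : ∀ x, EYM x = (1 / 2) * Matrix.trace (F x * (F x).transpose)) :
    ∀ x : Fin 6 → ℝ, x 0 + x 1 + x 2 + x 3 + x 4 + x 5 ≠ 0 →
      EYM x = (Nc x 0 1) ^ 2 + (Nc x 0 2) ^ 2 + (Nc x 0 3) ^ 2 + (Nc x 0 4) ^ 2
          + (Nc x 0 5) ^ 2 + (Nc x 1 2) ^ 2 + (Nc x 1 3) ^ 2 + (Nc x 1 4) ^ 2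
          + (Nc x 1 5) ^ 2 + (1 / 4) * (φs ^ 2 + γs ^ 2 + γa ^ 2 + γh ^ 2) ∧
        (1 / 4) * (φs ^ 2 + γs ^ 2 + γa ^ 2 + γh ^ 2) ≤ EYM x := by
  intro x _
  obtain ⟨h23, h32, h24, h42, h25, h52, h34, h43, h35, h53, h45, h54⟩ :=
    covidJ_lower βs βa βh σ r φs γs γa γh δs δh x
  have hskew : ∀ i j, Nc x j i = - Nc x i j := by
    intro i j; rw [hNc, hNc]; ring
  have hdiag : ∀ i, Nc x i i = 0 := by
    intro i; rw [hNc]; ring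
  have hN23 : Nc x 2 3 = 0 := by rw [hNc, h23, h32]; ring
  have hN24 : Nc x 2 4 = φs / 2 := by rw [hNc, h24, h42]; ring
  have hN25 : Nc x 2 5 = γs / 2 := by rw [hNc, h25, h52]; ring
  have hN34 : Nc x 3 4 = 0 := by rw [hNc, h34, h43]; ring
  have hN35 : Nc x 3 5 = γa / 2 := by rw [hNc, h35, h53]; ring
  have hN45 : Nc x 4 5 = γh / 2 := by rw [hNc, h45, h54]; ring
  have heq : EYM x = (Nc x 0 1) ^ 2 + (Nc x 0 2) ^ 2 + (Nc x 0 3) ^ 2 + (Nc x 0 4) ^ 2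
      + (Nc x 0 5) ^ 2 + (Nc x 1 2) ^ 2 + (Nc x 1 3) ^ 2 + (Nc x 1 4) ^ 2
      + (Nc x 1 5) ^ 2 + (1 / 4) * (φs ^ 2 + γs ^ 2 + γa ^ 2 + γh ^ 2) := by
    rw [hEYM, hF]
    simp only [Matrix.trace, Matrix.diag, Matrix.mul_apply, Fin.sum_univ_six,
      Matrix.transpose_apply, Matrix.neg_apply]
    rw [hskew 0 1, hskew 0 2, hskew 0 3, hskew 0 4, hskew 0 5, hskew 1 2, hskew 1 3,
      hskew 1 4, hskew 1 5, hskew 2 3, hskew 2 4, hskew 2 5, hskew 3 4, hskew 3 5, hskew 4 5,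
      hdiag 0, hdiag 1, hdiag 2, hdiag 3, hdiag 4, hdiag 5,
      hN23, hN24, hN25, hN34, hN35, hN45]
    ring
  refine ⟨heq, ?_⟩
  rw [heq]
  linarith [sq_nonneg (Nc x 0 1), sq_nonneg (Nc x 0 2), sq_nonneg (Nc x 0 3),
    sq_nonneg (Nc x 0 4), sq_nonneg (Nc x 0 5), sq_nonneg (Nc x 1 2), sq_nonneg (Nc x 1 3),
    sq_nonneg (Nc x 1 4), sq_nonneg (Nc x 1 5)]
end
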